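/- (Left-cancellation law for ⊕) Let A, B, C be st-flow graphs. If A ⊕ B = A ⊕ C, then B = C. -/

import Mathlib

/-- A flow graph: a finite directed multigraph (loops and parallel edges allowed)
with a distinguished source vertex `s` and target vertex `t`.
(Connectedness is stated as a separate predicate `FlowGraph.Connected`.) -/
structure FlowGraph where
  V : Type
  E : Type
  [finV : Finite V]
  [finE : Finite E]
  src : E → V
  tgt : E → V
  s : V
  t : V

attribute [instance] FlowGraph.finV FlowGraph.finE

namespace FlowGraph

/-- Adjacency in the underlying undirected multigraph, using only edges in `ES`. -/
def adjOn (A : FlowGraph) (ES : Set A.E) (u v : A.V) : Prop :=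
  ∃ e ∈ ES, (A.src e = u ∧ A.tgt e = v) ∨ (A.src e = v ∧ A.tgt e = u)

/-- Reachability in the underlying undirected multigraph, using only edges in `ES`. -/
def reachOn (A : FlowGraph) (ES : Set A.E) : A.V → A.V → Prop :=
  Relation.ReflTransGen (A.adjOn ES)

/-- The multigraph underlying a flow graph is connected. -/
def Connected (A : FlowGraph) : Prop := ∀ u v : A.V, A.reachOn Set.univ u v

/-- Isomorphism of flow graphs: a graph isomorphism mapping source to source
and target to target.  Equality "as flow graphs" means `Iso`. -/
def Iso (A B : FlowGraph) : Prop :=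
  ∃ (φV : A.V ≃ B.V) (φE : A.E ≃ B.E),
    (∀ e, B.src (φE e) = φV (A.src e)) ∧
    (∀ e, B.tgt (φE e) = φV (A.tgt e)) ∧
    φV A.s = B.s ∧ φV A.t = B.t

/-- The relation identifying `t_A` with `s_B` in the disjoint union of vertex sets. -/
def addRel (A B : FlowGraph) : (A.V ⊕ B.V) → (A.V ⊕ B.V) → Prop :=
  fun x y => x = Sum.inl A.t ∧ y = Sum.inr B.s

/-- The sum `A ⊕ B` of flow graphs: disjoint copies of `A` and `B`
with `t_A` identified with `s_B`; source `s_A`, target `t_B`. -/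
def add (A B : FlowGraph) : FlowGraph where
  V := Quot (addRel A B)
  E := A.E ⊕ B.E
  src := fun e =>
    Quot.mk _ (Sum.elim (fun a => Sum.inl (A.src a)) (fun b => Sum.inr (B.src b)) e)
  tgt := fun e =>
    Quot.mk _ (Sum.elim (fun a => Sum.inl (A.tgt a)) (fun b => Sum.inr (B.tgt b)) e)
  s := Quot.mk _ (Sum.inl A.s)
  t := Quot.mk _ (Sum.inr B.t)

/-- The relation gluing, for every edge `e = (u,v)` of `A`, the source of the
`e`-th copy of `B` to `u` and its target to `v`. -/
def mulRel (A B : FlowGraph) : (A.V ⊕ A.E × B.V) → (A.V ⊕ A.E × B.V) → Prop :=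
  fun x y => ∃ e : A.E,
    (x = Sum.inr (e, B.s) ∧ y = Sum.inl (A.src e)) ∨
    (x = Sum.inr (e, B.t) ∧ y = Sum.inl (A.tgt e))

/-- The product `A ⊗ B` of flow graphs: every directed edge `e = (u,v)` of `A` is
replaced by a fresh copy of `B`, with `u` identified with the source of the copy
and `v` with its target; source `s_A`, target `t_A`. -/
def mul (A B : FlowGraph) : FlowGraph where
  V := Quot (mulRel A B)
  E := A.E × B.E
  src := fun p => Quot.mk _ (Sum.inr (p.1, B.src p.2))
  tgt := fun p => Quot.mk _ (Sum.inr (p.1, B.tgt p.2))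
  s := Quot.mk _ (Sum.inl A.s)
  t := Quot.mk _ (Sum.inl A.t)

/-- The trivial flow graph `F₀`: one vertex, no edges, source = target. -/
def F0 : FlowGraph where
  V := Unit
  E := Empty
  src := Empty.elim
  tgt := Empty.elim
  s := ()
  t := ()

/-- The flow graph `F₁`: a single directed edge from source to target. -/
def F1 : FlowGraph where
  V := Bool
  E := Unit
  src := fun _ => false
  tgt := fun _ => true
  s := false
  t := true

/-- The graphical natural number `n`: the directed path with `n+1` vertices and
`n` edges, source its initial vertex and target its final vertex. -/
def pathGraph (n : ℕ) : FlowGraph where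
  V := Fin (n + 1)
  E := Fin n
  src := fun e => e.castSucc
  tgt := fun e => e.succ
  s := 0
  t := Fin.last n

/-- A flow graph is infinitesimal if it is nontrivial and its source equals its target. -/
def Infinitesimal (A : FlowGraph) : Prop := ¬ A.Iso F0 ∧ A.s = A.t

/-- `w` is a splitting vertex of `A`: `w ≠ s_A, t_A`, and after deleting `w`
(i.e. using only edges not incident to `w`), `s_A` and `t_A` lie in distinct
components (hence deletion produces at least two components). -/
def IsSplittingVertex (A : FlowGraph) (w : A.V) : Prop :=
  w ≠ A.s ∧ w ≠ A.t ∧ ¬ A.reachOn {e | A.src e ≠ w ∧ A.tgt e ≠ w} A.s A.t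

/-- `e₀` is a splitting edge of `A`: deleting `e₀` leaves exactly two components,
one containing `s_A` and the other containing `t_A`. -/
def IsSplittingEdge (A : FlowGraph) (e₀ : A.E) : Prop :=
  ¬ A.reachOn {e | e ≠ e₀} A.s A.t ∧
  ∀ v : A.V, A.reachOn {e | e ≠ e₀} v A.s ∨ A.reachOn {e | e ≠ e₀} v A.t

/-- The initial vertex of a directed edge traversed with direction `dir`
(`true` = forwards, `false` = backwards). -/
def stepSrc (A : FlowGraph) (p : A.E × Bool) : A.V := if p.2 then A.src p.1 else A.tgt p.1

/-- The final vertex of a directed edge traversed with direction `dir`. -/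
def stepTgt (A : FlowGraph) (p : A.E × Bool) : A.V := if p.2 then A.tgt p.1 else A.src p.1

/-- `l` is a walk from `u` to `v` in the underlying undirected multigraph:
a list of edges each traversed in some direction, consecutively matching. -/
def IsWalk (A : FlowGraph) : A.V → A.V → List (A.E × Bool) → Prop
  | u, v, [] => u = v
  | u, v, p :: l => A.stepSrc p = u ∧ A.IsWalk (A.stepTgt p) v l

/-- The list of vertices visited by a walk starting at `u`. -/
def walkVertices (A : FlowGraph) (u : A.V) : List (A.E × Bool) → List A.V
  | [] => [u]
  | p :: l => u :: A.walkVertices (A.stepTgt p) l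

/-- The edge `e` has the ST property: some non-self-intersecting path from `s_A`
to `t_A` in the underlying undirected multigraph traverses `e`. -/
def HasST (A : FlowGraph) (e : A.E) : Prop :=
  ∃ l : List (A.E × Bool), A.IsWalk A.s A.t l ∧ (A.walkVertices A.s l).Nodup ∧
    ∃ dir : Bool, (e, dir) ∈ l

/-- `A` is an st-flow graph: every edge has the ST property. -/
def IsSTGraph (A : FlowGraph) : Prop := ∀ e : A.E, A.HasST e

/-- The vertex set of the st-core: `s_A`, `t_A`, and all endpoints of ST edges. -/
def stCoreV (A : FlowGraph) : Set A.V :=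
  {v | v = A.s ∨ v = A.t ∨ ∃ e, A.HasST e ∧ (A.src e = v ∨ A.tgt e = v)}

/-- The st-core of `A`: delete all edges without the ST property and keep the
subgraph induced by the remaining edges together with `s_A` and `t_A`. -/
def stCore (A : FlowGraph) : FlowGraph where
  V := {v // v ∈ A.stCoreV}
  E := {e // A.HasST e}
  src := fun e => ⟨A.src e.1, Or.inr (Or.inr ⟨e.1, e.2, Or.inl rfl⟩)⟩
  tgt := fun e => ⟨A.tgt e.1, Or.inr (Or.inr ⟨e.1, e.2, Or.inr rfl⟩)⟩
  s := ⟨A.s, Or.inl rfl⟩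
  t := ⟨A.t, Or.inr (Or.inl rfl)⟩

/-- An embedding of (the multigraph of) `A` into (the multigraph of) `B`:
injective on vertices and on edges, preserving directed incidence. -/
structure Emb (A B : FlowGraph) where
  vmap : A.V → B.V
  emap : A.E → B.E
  vinj : Function.Injective vmap
  einj : Function.Injective emap
  src_map : ∀ e, B.src (emap e) = vmap (A.src e)
  tgt_map : ∀ e, B.tgt (emap e) = vmap (A.tgt e)

/-- `(V₁, E₁)` is a subgraph: all endpoints of edges in `E₁` lie in `V₁`. -/
def IsSubgraph (A : FlowGraph) (VS : Set A.V) (ES : Set A.E) : Prop :=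
  ∀ e ∈ ES, A.src e ∈ VS ∧ A.tgt e ∈ VS

/-- The subgraph `(VS, ES)` is connected. -/
def SubConnected (A : FlowGraph) (VS : Set A.V) (ES : Set A.E) : Prop :=
  ∀ u ∈ VS, ∀ v ∈ VS, A.reachOn ES u v

/-- An `(s,t)`-splitting of `A`: two connected subgraphs, the first containing
`s_A`, the second containing `t_A`, whose edge sets partition the edges of `A`. -/
def IsSplitting (A : FlowGraph) (V₁ V₂ : Set A.V) (E₁ E₂ : Set A.E) : Prop :=
  A.IsSubgraph V₁ E₁ ∧ A.IsSubgraph V₂ E₂ ∧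
  A.SubConnected V₁ E₁ ∧ A.SubConnected V₂ E₂ ∧
  A.s ∈ V₁ ∧ A.t ∈ V₂ ∧
  E₁ ∪ E₂ = Set.univ ∧ E₁ ∩ E₂ = ∅

/-- The weak order `A ⩽ B`: there is an `(s,t)`-splitting `(H₁, H₂)` of `A` and
graph embeddings `φᵢ : Hᵢ → B` with `φ₁ s_A = s_B`, `φ₂ t_A = t_B`, and whose
edge images are disjoint. -/
def weakLE (A B : FlowGraph) : Prop :=
  ∃ (V₁ V₂ : Set A.V) (E₁ E₂ : Set A.E)
    (φ₁V φ₂V : A.V → B.V) (φ₁E φ₂E : A.E → B.E),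
    A.IsSplitting V₁ V₂ E₁ E₂ ∧
    Set.InjOn φ₁V V₁ ∧ Set.InjOn φ₂V V₂ ∧
    Set.InjOn φ₁E E₁ ∧ Set.InjOn φ₂E E₂ ∧
    (∀ e ∈ E₁, B.src (φ₁E e) = φ₁V (A.src e) ∧ B.tgt (φ₁E e) = φ₁V (A.tgt e)) ∧
    (∀ e ∈ E₂, B.src (φ₂E e) = φ₂V (A.src e) ∧ B.tgt (φ₂E e) = φ₂V (A.tgt e)) ∧
    φ₁V A.s = B.s ∧ φ₂V A.t = B.t ∧
    (φ₁E '' E₁) ∩ (φ₂E '' E₂) = ∅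

/-- `k`-fold sum `C ⊕ C ⊕ ⋯ ⊕ C` (`k` summands); `smul 0 C = F₀`. -/
def smul : ℕ → FlowGraph → FlowGraph
  | 0, _ => F0
  | n + 1, C => C.add (smul n C)

/-- Sum of a head flow graph with a list of further summands:
`sumList A₀ [A₁, …, Aₖ] = A₀ ⊕ A₁ ⊕ ⋯ ⊕ Aₖ`. -/
def sumList (A : FlowGraph) (L : List FlowGraph) : FlowGraph := L.foldl add A

/-- `A` is ⊕-irreducible: it is not (isomorphic to) a sum of two nontrivial flow graphs. -/
def IsIrreducible (A : FlowGraph) : Prop :=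
  ¬ ∃ B C : FlowGraph, B.Connected ∧ C.Connected ∧
      ¬ B.Iso F0 ∧ ¬ C.Iso F0 ∧ A.Iso (B.add C)


section Lemmas
open Relation

variable {A B : FlowGraph}

lemma adjOn_symm {ES : Set A.E} {u v : A.V} (h : A.adjOn ES u v) : A.adjOn ES v u := by
  obtain ⟨e, he, h | h⟩ := h
  · exact ⟨e, he, Or.inr h⟩
  · exact ⟨e, he, Or.inl h⟩

lemma reachOn_symm {ES : Set A.E} {u v : A.V} (h : A.reachOn ES u v) : A.reachOn ES v u := by
  induction h with
  | refl => exact ReflTransGen.refl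
  | tail _ hadj ih => exact ReflTransGen.head (adjOn_symm hadj) ih

lemma reach_hom (f : A.V → B.V) (g : A.E → B.E)
    (hs : ∀ e, B.src (g e) = f (A.src e)) (ht : ∀ e, B.tgt (g e) = f (A.tgt e))
    {ES : Set A.E} {ES' : Set B.E} (hE : ∀ e ∈ ES, g e ∈ ES')
    {u v : A.V} (h : A.reachOn ES u v) : B.reachOn ES' (f u) (f v) := by
  induction h with
  | refl => exact ReflTransGen.refl
  | tail _ hadj ih =>
      obtain ⟨e, he, h | h⟩ := hadj
      · exact ih.tail ⟨g e, hE e he, Or.inl ⟨by rw [hs, h.1], by rw [ht, h.2]⟩⟩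
      · exact ih.tail ⟨g e, hE e he, Or.inr ⟨by rw [hs, h.1], by rw [ht, h.2]⟩⟩

lemma walkVertices_ne_nil {u : A.V} {l : List (A.E × Bool)} : A.walkVertices u l ≠ [] := by
  cases l <;> simp [walkVertices]

lemma mem_walkVertices_self {u : A.V} {l : List (A.E × Bool)} : u ∈ A.walkVertices u l := by
  cases l <;> simp [walkVertices]

lemma last_mem_walkVertices {u v : A.V} {l : List (A.E × Bool)} (h : A.IsWalk u v l) :
    v ∈ A.walkVertices u l := by
  induction l generalizing u with
  | nil => simp [IsWalk] at h; simp [walkVertices, h]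
  | cons p l ih => exact List.mem_cons_of_mem _ (ih h.2)

lemma step_mem_walkVertices {u v : A.V} {l : List (A.E × Bool)} (h : A.IsWalk u v l)
    {p : A.E × Bool} (hp : p ∈ l) :
    A.stepSrc p ∈ A.walkVertices u l ∧ A.stepTgt p ∈ A.walkVertices u l := by
  induction l generalizing u with
  | nil => simp at hp
  | cons q l ih =>
      rcases List.mem_cons.1 hp with rfl | hp
      · refine ⟨by simp [walkVertices, h.1], ?_⟩
        exact List.mem_cons_of_mem _ mem_walkVertices_self
      · obtain ⟨h1, h2⟩ := ih h.2 hp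
        exact ⟨List.mem_cons_of_mem _ h1, List.mem_cons_of_mem _ h2⟩

lemma reachOn_of_walk {ES : Set A.E} {u v : A.V} {l : List (A.E × Bool)}
    (h : A.IsWalk u v l) (hl : ∀ p ∈ l, p.1 ∈ ES) : A.reachOn ES u v := by
  induction l generalizing u with
  | nil => simp [IsWalk] at h; exact h ▸ ReflTransGen.refl
  | cons p l ih =>
      refine ReflTransGen.head ?_ (ih h.2 fun q hq => hl q (List.mem_cons_of_mem _ hq))
      refine ⟨p.1, hl p List.mem_cons_self, ?_⟩
      have h1 := h.1
      cases hdir : p.2 <;> simp only [stepSrc, stepTgt, hdir, if_true, if_false,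
        Bool.cond_true, Bool.cond_false, ite_true, ite_false] at h1 ⊢
      · exact Or.inr ⟨rfl, h1⟩
      · exact Or.inl ⟨h1, trivial⟩

lemma walk_nil_of_nodup {u v : A.V} {l : List (A.E × Bool)} (h : A.IsWalk u v l)
    (hnd : (A.walkVertices u l).Nodup) (huv : u = v) : l = [] := by
  cases l with
  | nil => rfl
  | cons p l =>
      exfalso
      have hv : v ∈ A.walkVertices (A.stepTgt p) l := last_mem_walkVertices h.2
      simp only [walkVertices, List.nodup_cons] at hnd
      exact hnd.1 (huv ▸ hv)

lemma step_ne_of_nodup {u v : A.V} {l : List (A.E × Bool)} (h : A.IsWalk u v l)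
    (hnd : (A.walkVertices u l).Nodup) {p : A.E × Bool} (hp : p ∈ l) :
    A.stepSrc p ≠ A.stepTgt p := by
  induction l generalizing u with
  | nil => simp at hp
  | cons q l ih =>
      simp only [walkVertices, List.nodup_cons] at hnd
      rcases List.mem_cons.1 hp with rfl | hp
      · intro heq
        have : A.stepTgt p ∈ A.walkVertices (A.stepTgt p) l := mem_walkVertices_self
        exact hnd.1 (h.1 ▸ heq ▸ this)
      · exact ih h.2 hnd.2 hp

lemma no_loop (hst : A.IsSTGraph) (e : A.E) : A.src e ≠ A.tgt e := by
  obtain ⟨l, hw, hnd, dir, hmem⟩ := hst e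
  have := step_ne_of_nodup hw hnd hmem
  cases dir <;> simp [stepSrc, stepTgt] at this <;> [exact (Ne.symm this); exact this]

def flipWalk (l : List (A.E × Bool)) : List (A.E × Bool) :=
  (l.map fun p => (p.1, !p.2)).reverse

lemma stepSrc_flip (p : A.E × Bool) : A.stepSrc (p.1, !p.2) = A.stepTgt p := by
  cases h : p.2 <;> simp [stepSrc, stepTgt, h]

lemma stepTgt_flip (p : A.E × Bool) : A.stepTgt (p.1, !p.2) = A.stepSrc p := by
  cases h : p.2 <;> simp [stepSrc, stepTgt, h]

lemma isWalk_append {u v w : A.V} {l1 l2 : List (A.E × Bool)}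
    (h1 : A.IsWalk u v l1) (h2 : A.IsWalk v w l2) : A.IsWalk u w (l1 ++ l2) := by
  induction l1 generalizing u with
  | nil => simp [IsWalk] at h1; simpa [h1] using h2
  | cons p l ih => exact ⟨h1.1, ih h1.2⟩

lemma isWalk_flip {u v : A.V} {l : List (A.E × Bool)} (h : A.IsWalk u v l) :
    A.IsWalk v u (A.flipWalk l) := by
  induction l generalizing u with
  | nil => simp [IsWalk] at h ⊢; exact h.symm
  | cons p l ih =>
      have : A.flipWalk (p :: l) = A.flipWalk l ++ [(p.1, !p.2)] := by
        simp [flipWalk]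
      rw [this]
      refine isWalk_append (ih h.2) ?_
      exact ⟨stepSrc_flip p, by simp [IsWalk, stepTgt_flip, h.1]⟩

lemma walkVertices_append {u v : A.V} {l1 l2 : List (A.E × Bool)} (h : A.IsWalk u v l1) :
    A.walkVertices u (l1 ++ l2) = (A.walkVertices u l1).dropLast ++ A.walkVertices v l2 := by
  induction l1 generalizing u with
  | nil => simp [IsWalk] at h; simp [walkVertices, h]
  | cons p l ih =>
      simp only [List.cons_append, walkVertices, List.append_eq]
      rw [ih h.2, List.dropLast_cons_of_ne_nil walkVertices_ne_nil, List.cons_append]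

lemma walkVertices_flip {u v : A.V} {l : List (A.E × Bool)} (h : A.IsWalk u v l) :
    A.walkVertices v (A.flipWalk l) = (A.walkVertices u l).reverse := by
  induction l generalizing u with
  | nil => simp [IsWalk] at h; simp [walkVertices, flipWalk, h]
  | cons p l ih =>
      have hfl : A.flipWalk (p :: l) = A.flipWalk l ++ [(p.1, !p.2)] := by simp [flipWalk]
      rw [hfl, walkVertices_append (isWalk_flip h.2), ih h.2]
      have h2 : A.walkVertices (A.stepTgt p) [(p.1, !p.2)] = [A.stepTgt p, u] := by
        simp [walkVertices, stepTgt_flip, h.1]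
      rw [h2]
      simp only [walkVertices, List.reverse_cons]
      rw [← List.dropLast_append_getLast (l := (A.walkVertices (A.stepTgt p) l).reverse)
        (by simp [walkVertices_ne_nil])] at *
      have hhead : (A.walkVertices (A.stepTgt p) l).reverse.getLast (by simp [walkVertices_ne_nil])
          = A.stepTgt p := by
        rw [List.getLast_reverse]
        cases l <;> simp [walkVertices]
      rw [List.dropLast_reverse] at *
      simp [hhead]

lemma suffix_walk {v : A.V} : ∀ (l : List (A.E × Bool)) (u : A.V), A.IsWalk u v l →
    (A.walkVertices u l).Nodup → ∀ b ∈ A.walkVertices u l, b ≠ u →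
    ∃ l', A.IsWalk b v l' ∧ ∀ x ∈ A.walkVertices b l', x ∈ A.walkVertices u l ∧ x ≠ u := by
  intro l
  induction l with
  | nil =>
      intro u h hnd b hb hbu
      simp [walkVertices] at hb
      exact absurd hb hbu
  | cons p l ih =>
      intro u h hnd b hb hbu
      simp only [walkVertices, List.nodup_cons, List.mem_cons] at hnd hb
      rcases hb with rfl | hb
      · exact absurd rfl hbu
      by_cases hbe : b = A.stepTgt p
      · subst hbe
        refine ⟨l, h.2, fun x hx => ⟨List.mem_cons_of_mem _ hx, ?_⟩⟩
        rintro rfl; exact hnd.1 hx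
      · obtain ⟨l', hw', hsub⟩ := ih (A.stepTgt p) h.2 hnd.2 b hb hbe
        refine ⟨l', hw', fun x hx => ⟨List.mem_cons_of_mem _ (hsub x hx).1, ?_⟩⟩
        rintro rfl; exact hnd.1 (hsub x hx).1


lemma exists_st_walk_through (hA : A.Connected) (hst : A.IsSTGraph) (hne : A.s ≠ A.t)
    (b : A.V) :
    ∃ l, A.IsWalk A.s A.t l ∧ (A.walkVertices A.s l).Nodup ∧ b ∈ A.walkVertices A.s l := by
  have key : ∀ e : A.E, ∃ l, A.IsWalk A.s A.t l ∧ (A.walkVertices A.s l).Nodup ∧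
      A.src e ∈ A.walkVertices A.s l ∧ A.tgt e ∈ A.walkVertices A.s l := by
    intro e
    obtain ⟨l, hw, hnd, dir, hm⟩ := hst e
    have hmem := step_mem_walkVertices hw hm
    refine ⟨l, hw, hnd, ?_, ?_⟩ <;> cases dir <;>
      simp only [stepSrc, stepTgt, if_true, if_false, Bool.false_eq_true, ite_true,
        ite_false] at hmem <;> tauto
  rcases (hA b A.t).cases_head with rfl | ⟨c, hadj, _⟩
  · rcases (hA A.s A.t).cases_head with h | ⟨c, ⟨e, _, _⟩, _⟩
    · exact absurd h hne
    · obtain ⟨l, hw, hnd, _, _⟩ := key e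
      exact ⟨l, hw, hnd, last_mem_walkVertices hw⟩
  · obtain ⟨e, -, h | h⟩ := hadj
    · obtain ⟨l, hw, hnd, h1, h2⟩ := key e
      exact ⟨l, hw, hnd, by rw [← h.1]; exact h1⟩
    · obtain ⟨l, hw, hnd, h1, h2⟩ := key e
      exact ⟨l, hw, hnd, by rw [← h.2]; exact h2⟩

lemma reach_avoid_of_walk {x v b : A.V} {l : List (A.E × Bool)} (hw : A.IsWalk x v l)
    (hnd : (A.walkVertices x l).Nodup) (hb : b ∈ A.walkVertices x l) (hbx : b ≠ x) :
    A.reachOn {e | A.src e ≠ x ∧ A.tgt e ≠ x} b v := by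
  obtain ⟨l', hw', hsub⟩ := suffix_walk l x hw hnd b hb hbx
  refine reachOn_of_walk hw' ?_
  intro p hp
  have h2 := step_mem_walkVertices hw' hp
  have hs := (hsub _ h2.1).2
  have ht := (hsub _ h2.2).2
  show A.src p.1 ≠ x ∧ A.tgt p.1 ≠ x
  cases hdir : p.2 <;>
    simp only [stepSrc, stepTgt, hdir, if_true, if_false, Bool.false_eq_true, ite_true,
      ite_false] at hs ht <;> exact ⟨by tauto, by tauto⟩

lemma st_reach (hA : A.Connected) (hst : A.IsSTGraph) (hne : A.s ≠ A.t) {b : A.V}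
    (hb : b ≠ A.s) : A.reachOn {e | A.src e ≠ A.s ∧ A.tgt e ≠ A.s} b A.t := by
  obtain ⟨l, hw, hnd, hbm⟩ := exists_st_walk_through hA hst hne b
  exact reach_avoid_of_walk hw hnd hbm hb

lemma st_reach' (hA : A.Connected) (hst : A.IsSTGraph) (hne : A.s ≠ A.t) {b : A.V}
    (hb : b ≠ A.t) : A.reachOn {e | A.src e ≠ A.t ∧ A.tgt e ≠ A.t} b A.s := by
  obtain ⟨l, hw, hnd, hbm⟩ := exists_st_walk_through hA hst hne b
  have hw' := isWalk_flip hw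
  have hnd' : (A.walkVertices A.t (A.flipWalk l)).Nodup := by
    rw [walkVertices_flip hw]; exact List.nodup_reverse.2 hnd
  have hbm' : b ∈ A.walkVertices A.t (A.flipWalk l) := by
    rw [walkVertices_flip hw]; simpa using hbm
  exact reach_avoid_of_walk hw' hnd' hbm' hb


open Classical in
noncomputable def normV (A B : FlowGraph) : (A.V ⊕ B.V) → (A.V ⊕ B.V) := fun x =>
  if x = Sum.inl A.t then Sum.inr B.s else x

lemma add_mk_eq_iff {A B : FlowGraph} {x y : A.V ⊕ B.V} :
    (Quot.mk (addRel A B) x = Quot.mk (addRel A B) y) ↔ normV A B x = normV A B y := by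
  classical
  constructor
  · intro h
    have hresp : ∀ p q, addRel A B p q → normV A B p = normV A B q := by
      rintro p q ⟨rfl, rfl⟩
      simp [normV]
    exact congrArg (Quot.lift (normV A B) hresp) h
  · intro h
    by_cases hx : x = Sum.inl A.t <;> by_cases hy : y = Sum.inl A.t <;>
      simp only [normV, hx, hy, if_true, if_false, ite_true, ite_false] at h
    · rw [hx, hy]
    · subst hx
      rw [← h]
      exact Quot.sound ⟨rfl, rfl⟩
    · subst hy
      rw [h]
      exact (Quot.sound ⟨rfl, rfl⟩).symm
    · rw [h]

lemma add_inl_inj {A B : FlowGraph} {a a' : A.V} :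
    Quot.mk (addRel A B) (Sum.inl a) = Quot.mk (addRel A B) (Sum.inl a') ↔ a = a' := by
  classical
  rw [add_mk_eq_iff]
  by_cases h1 : a = A.t <;> by_cases h2 : a' = A.t <;>
    simp [normV, h1, h2]
  exact fun hc => h2 hc.symm

lemma add_inr_inj {A B : FlowGraph} {b b' : B.V} :
    Quot.mk (addRel A B) (Sum.inr b) = Quot.mk (addRel A B) (Sum.inr b') ↔ b = b' := by
  classical
  rw [add_mk_eq_iff]
  simp [normV]

lemma add_inl_eq_inr {A B : FlowGraph} {a : A.V} {b : B.V} :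
    Quot.mk (addRel A B) (Sum.inl a) = Quot.mk (addRel A B) (Sum.inr b) ↔
      a = A.t ∧ b = B.s := by
  classical
  rw [add_mk_eq_iff]
  by_cases h1 : a = A.t <;> simp [normV, h1, eq_comm]

lemma add_glue {A B : FlowGraph} :
    Quot.mk (addRel A B) (Sum.inl A.t) = Quot.mk (addRel A B) (Sum.inr B.s) :=
  Quot.sound ⟨rfl, rfl⟩

lemma add_vcases {A B : FlowGraph} (v : (A.add B).V) :
    (∃ a, v = Quot.mk (addRel A B) (Sum.inl a)) ∨
      (∃ b, v = Quot.mk (addRel A B) (Sum.inr b)) := by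
  induction v using Quot.ind with
  | _ x => cases x with
    | inl a => exact Or.inl ⟨a, rfl⟩
    | inr b => exact Or.inr ⟨b, rfl⟩

lemma add_trap_inl {A B : FlowGraph} {a : A.V} {x : (A.add B).V} (ha : a ≠ A.t)
    (h : (A.add B).reachOn
      {e | (A.add B).src e ≠ Quot.mk (addRel A B) (Sum.inr B.s) ∧
           (A.add B).tgt e ≠ Quot.mk (addRel A B) (Sum.inr B.s)}
      (Quot.mk (addRel A B) (Sum.inl a)) x) :
    ∃ a', x = Quot.mk (addRel A B) (Sum.inl a') ∧ a' ≠ A.t := by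
  induction h with
  | refl => exact ⟨a, rfl, ha⟩
  | tail _ hadj ih =>
      obtain ⟨a', rfl, ha'⟩ := ih
      obtain ⟨e, he, hor⟩ := hadj
      cases e with
      | inl ea =>
          have h1 : A.src ea ≠ A.t := fun hc => he.1 (by
            show Quot.mk (addRel A B) (Sum.inl (A.src ea)) = _
            exact add_inl_eq_inr.2 ⟨hc, rfl⟩)
          have h2 : A.tgt ea ≠ A.t := fun hc => he.2 (by
            show Quot.mk (addRel A B) (Sum.inl (A.tgt ea)) = _
            exact add_inl_eq_inr.2 ⟨hc, rfl⟩)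
          rcases hor with ⟨hs, htg⟩ | ⟨hs, htg⟩
          · exact ⟨A.tgt ea, htg.symm, h2⟩
          · exact ⟨A.src ea, hs.symm, h1⟩
      | inr eb =>
          exfalso
          rcases hor with ⟨hs, htg⟩ | ⟨hs, htg⟩
          · exact ha' (add_inl_eq_inr.1 (show Quot.mk (addRel A B) (Sum.inl a') =
              Quot.mk (addRel A B) (Sum.inr (B.src eb)) from hs.symm)).1
          · exact ha' (add_inl_eq_inr.1 (show Quot.mk (addRel A B) (Sum.inl a') =
              Quot.mk (addRel A B) (Sum.inr (B.tgt eb)) from htg.symm)).1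

lemma add_trap_inr {A B : FlowGraph} {b : B.V} {x : (A.add B).V} (hb : b ≠ B.s)
    (h : (A.add B).reachOn
      {e | (A.add B).src e ≠ Quot.mk (addRel A B) (Sum.inr B.s) ∧
           (A.add B).tgt e ≠ Quot.mk (addRel A B) (Sum.inr B.s)}
      (Quot.mk (addRel A B) (Sum.inr b)) x) :
    ∃ b', x = Quot.mk (addRel A B) (Sum.inr b') ∧ b' ≠ B.s := by
  induction h with
  | refl => exact ⟨b, rfl, hb⟩
  | tail _ hadj ih =>
      obtain ⟨b', rfl, hb'⟩ := ih
      obtain ⟨e, he, hor⟩ := hadj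
      cases e with
      | inr eb =>
          have h1 : B.src eb ≠ B.s := fun hc => he.1 (by
            show Quot.mk (addRel A B) (Sum.inr (B.src eb)) = _
            exact add_inr_inj.2 hc)
          have h2 : B.tgt eb ≠ B.s := fun hc => he.2 (by
            show Quot.mk (addRel A B) (Sum.inr (B.tgt eb)) = _
            exact add_inr_inj.2 hc)
          rcases hor with ⟨hs, htg⟩ | ⟨hs, htg⟩
          · exact ⟨B.tgt eb, htg.symm, h2⟩
          · exact ⟨B.src eb, hs.symm, h1⟩
      | inl ea =>
          exfalso
          rcases hor with ⟨hs, htg⟩ | ⟨hs, htg⟩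
          · exact hb' (add_inl_eq_inr.1 (show Quot.mk (addRel A B) (Sum.inl (A.src ea)) =
              Quot.mk (addRel A B) (Sum.inr b') from hs)).2
          · exact hb' (add_inl_eq_inr.1 (show Quot.mk (addRel A B) (Sum.inl (A.tgt ea)) =
              Quot.mk (addRel A B) (Sum.inr b') from htg)).2


lemma edges_isEmpty_of_st (hst : A.IsSTGraph) (hself : A.s = A.t) : IsEmpty A.E := by
  constructor
  intro e
  obtain ⟨l, hw, hnd, dir, hm⟩ := hst e
  rw [walk_nil_of_nodup hw hnd hself] at hm
  simp at hm

lemma eq_of_no_edges (hA : A.Connected) (hE : IsEmpty A.E) (u v : A.V) : u = v := by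
  have h := hA u v
  induction h with
  | refl => rfl
  | tail _ hadj ih =>
      obtain ⟨e, _, _⟩ := hadj
      exact hE.elim e

lemma iso_of_no_edges {C : FlowGraph} (hB : B.Connected) (hC : C.Connected)
    (hBE : IsEmpty B.E) (hCE : IsEmpty C.E) : B.Iso C := by
  refine ⟨⟨fun _ => C.s, fun _ => B.s, fun u => eq_of_no_edges hB hBE _ _,
      fun v => eq_of_no_edges hC hCE _ _⟩, Equiv.equivOfIsEmpty _ _,
    fun e => hBE.elim e, fun e => hBE.elim e, rfl, eq_of_no_edges hC hCE _ _⟩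

lemma edge_at_t (hA : A.Connected) (hne : A.s ≠ A.t) :
    ∃ e, A.src e = A.t ∨ A.tgt e = A.t := by
  rcases (reachOn_symm (hA A.s A.t)).cases_head with h | ⟨c, ⟨e, _, h | h⟩, _⟩
  · exact absurd h.symm hne
  · exact ⟨e, Or.inl h.1⟩
  · exact ⟨e, Or.inr h.2⟩

lemma edge_at_s (hA : A.Connected) (hne : A.s ≠ A.t) :
    ∃ e, A.src e = A.s ∨ A.tgt e = A.s := by
  rcases (hA A.s A.t).cases_head with h | ⟨c, ⟨e, _, h | h⟩, _⟩
  · exact absurd h hne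
  · exact ⟨e, Or.inl h.1⟩
  · exact ⟨e, Or.inr h.2⟩

lemma iso_reach_avoid {S S' : FlowGraph} (φV : S.V ≃ S'.V) (φE : S.E ≃ S'.E)
    (hsrc : ∀ e, S'.src (φE e) = φV (S.src e)) (htgt : ∀ e, S'.tgt (φE e) = φV (S.tgt e))
    (z u v : S.V) :
    S.reachOn {e | S.src e ≠ z ∧ S.tgt e ≠ z} u v ↔
      S'.reachOn {e | S'.src e ≠ φV z ∧ S'.tgt e ≠ φV z} (φV u) (φV v) := by
  constructor
  · refine reach_hom φV φE hsrc htgt ?_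
    intro e he
    exact ⟨by rw [hsrc]; exact fun hc => he.1 (φV.injective hc),
      by rw [htgt]; exact fun hc => he.2 (φV.injective hc)⟩
  · intro h
    have hsrc' : ∀ e', S.src (φE.symm e') = φV.symm (S'.src e') := by
      intro e'
      have := hsrc (φE.symm e')
      rw [φE.apply_symm_apply] at this
      rw [this, φV.symm_apply_apply]
    have htgt' : ∀ e', S.tgt (φE.symm e') = φV.symm (S'.tgt e') := by
      intro e'
      have := htgt (φE.symm e')
      rw [φE.apply_symm_apply] at this
      rw [this, φV.symm_apply_apply]
    have := reach_hom φV.symm φE.symm hsrc' htgt' (ES := {e | S'.src e ≠ φV z ∧ S'.tgt e ≠ φV z})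
      (ES' := {e | S.src e ≠ z ∧ S.tgt e ≠ z}) ?_ h
    · simpa using this
    · intro e' he'
      refine ⟨?_, ?_⟩
      · rw [hsrc']
        intro hc
        exact he'.1 (by rw [← φV.apply_symm_apply (S'.src e'), hc])
      · rw [htgt']
        intro hc
        exact he'.2 (by rw [← φV.apply_symm_apply (S'.tgt e'), hc])

section AddLift

variable {A B : FlowGraph}

/-- Lift of a `B`-reach avoiding `B.s` into `A.add B`, avoiding the glue vertex. -/
lemma add_lift_inr_avoid_glue {b b' : B.V}
    (h : B.reachOn {e | B.src e ≠ B.s ∧ B.tgt e ≠ B.s} b b') :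
    (A.add B).reachOn
      {e | (A.add B).src e ≠ Quot.mk (addRel A B) (Sum.inr B.s) ∧
           (A.add B).tgt e ≠ Quot.mk (addRel A B) (Sum.inr B.s)}
      (Quot.mk (addRel A B) (Sum.inr b)) (Quot.mk (addRel A B) (Sum.inr b')) := by
  refine reach_hom (B := A.add B) (fun v => Quot.mk (addRel A B) (Sum.inr v))
    (Sum.inr : B.E → (A.add B).E) (fun e => rfl) (fun e => rfl) ?_ h
  intro e he
  exact ⟨fun hc => he.1 (add_inr_inj.1 hc), fun hc => he.2 (add_inr_inj.1 hc)⟩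

/-- Lift of an `A`-reach avoiding `A.t` into `A.add B`, avoiding the glue vertex. -/
lemma add_lift_inl_avoid_glue {a a' : A.V}
    (h : A.reachOn {e | A.src e ≠ A.t ∧ A.tgt e ≠ A.t} a a') :
    (A.add B).reachOn
      {e | (A.add B).src e ≠ Quot.mk (addRel A B) (Sum.inr B.s) ∧
           (A.add B).tgt e ≠ Quot.mk (addRel A B) (Sum.inr B.s)}
      (Quot.mk (addRel A B) (Sum.inl a)) (Quot.mk (addRel A B) (Sum.inl a')) := by
  refine reach_hom (B := A.add B) (fun v => Quot.mk (addRel A B) (Sum.inl v))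
    (Sum.inl : A.E → (A.add B).E) (fun e => rfl) (fun e => rfl) ?_ h
  intro e he
  exact ⟨fun hc => he.1 (add_inl_eq_inr.1 hc).1, fun hc => he.2 (add_inl_eq_inr.1 hc).1⟩

/-- Lift of an unrestricted `B`-reach into `A.add B`, avoiding any vertex of the
form `⟦inl a0⟧` with `a0 ≠ A.t`. -/
lemma add_lift_inr_avoid_inl {b b' : B.V} {a0 : A.V} (ha0 : a0 ≠ A.t)
    (h : B.reachOn Set.univ b b') :
    (A.add B).reachOn
      {e | (A.add B).src e ≠ Quot.mk (addRel A B) (Sum.inl a0) ∧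
           (A.add B).tgt e ≠ Quot.mk (addRel A B) (Sum.inl a0)}
      (Quot.mk (addRel A B) (Sum.inr b)) (Quot.mk (addRel A B) (Sum.inr b')) := by
  refine reach_hom (B := A.add B) (fun v => Quot.mk (addRel A B) (Sum.inr v))
    (Sum.inr : B.E → (A.add B).E) (fun e => rfl) (fun e => rfl) ?_ h
  intro e _
  constructor
  · intro hc
    exact ha0 (add_inl_eq_inr.1 (show Quot.mk (addRel A B) (Sum.inl a0) = _ from hc.symm)).1
  · intro hc
    exact ha0 (add_inl_eq_inr.1 (show Quot.mk (addRel A B) (Sum.inl a0) = _ from hc.symm)).1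

/-- Lift of an unrestricted `A`-reach into `A.add B`, avoiding any vertex of the
form `⟦inr b0⟧` with `b0 ≠ B.s`. -/
lemma add_lift_inl_avoid_inr {a a' : A.V} {b0 : B.V} (hb0 : b0 ≠ B.s)
    (h : A.reachOn Set.univ a a') :
    (A.add B).reachOn
      {e | (A.add B).src e ≠ Quot.mk (addRel A B) (Sum.inr b0) ∧
           (A.add B).tgt e ≠ Quot.mk (addRel A B) (Sum.inr b0)}
      (Quot.mk (addRel A B) (Sum.inl a)) (Quot.mk (addRel A B) (Sum.inl a')) := by
  refine reach_hom (B := A.add B) (fun v => Quot.mk (addRel A B) (Sum.inl v))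
    (Sum.inl : A.E → (A.add B).E) (fun e => rfl) (fun e => rfl) ?_ h
  intro e _
  exact ⟨fun hc => hb0 (add_inl_eq_inr.1 hc).2, fun hc => hb0 (add_inl_eq_inr.1 hc).2⟩

end AddLift


/-- Vertices on the `z`-side away from `t0`: those that cannot reach `t0` when the
vertex `z` is deleted, together with `z` itself. -/
def vSide (S : FlowGraph) (z t0 : S.V) : Set S.V :=
  {u | ¬ S.reachOn {e | S.src e ≠ z ∧ S.tgt e ≠ z} u t0 ∨ u = z}

def vSideE (S : FlowGraph) (z t0 : S.V) : Set S.E :=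
  {e | S.src e ∈ S.vSide z t0 ∧ S.tgt e ∈ S.vSide z t0}

lemma mem_vSide {S : FlowGraph} {z t0 u : S.V} :
    u ∈ S.vSide z t0 ↔
      (¬ S.reachOn {e | S.src e ≠ z ∧ S.tgt e ≠ z} u t0 ∨ u = z) := Iff.rfl

lemma mem_vSideE {S : FlowGraph} {z t0 : S.V} {e : S.E} :
    e ∈ S.vSideE z t0 ↔ (S.src e ∈ S.vSide z t0 ∧ S.tgt e ∈ S.vSide z t0) := Iff.rfl

lemma vSide_iso {S S' : FlowGraph} (φV : S.V ≃ S'.V) (φE : S.E ≃ S'.E)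
    (hsrc : ∀ e, S'.src (φE e) = φV (S.src e)) (htgt : ∀ e, S'.tgt (φE e) = φV (S.tgt e))
    (z t0 u : S.V) :
    φV u ∈ S'.vSide (φV z) (φV t0) ↔ u ∈ S.vSide z t0 := by
  have hr := iso_reach_avoid φV φE hsrc htgt z u t0
  rw [mem_vSide, mem_vSide, ← hr, φV.apply_eq_iff_eq]

lemma vSideE_image {S S' : FlowGraph} (φV : S.V ≃ S'.V) (φE : S.E ≃ S'.E)
    (hsrc : ∀ e, S'.src (φE e) = φV (S.src e)) (htgt : ∀ e, S'.tgt (φE e) = φV (S.tgt e))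
    (z t0 : S.V) :
    φE '' S.vSideE z t0 = S'.vSideE (φV z) (φV t0) := by
  ext e'
  constructor
  · rintro ⟨e, he, rfl⟩
    exact ⟨by rw [hsrc]; exact (vSide_iso φV φE hsrc htgt z t0 _).2 he.1,
      by rw [htgt]; exact (vSide_iso φV φE hsrc htgt z t0 _).2 he.2⟩
  · intro he'
    refine ⟨φE.symm e', ?_, φE.apply_symm_apply e'⟩
    have h1 := he'.1
    have h2 := he'.2
    rw [← φE.apply_symm_apply e', hsrc] at h1
    rw [← φE.apply_symm_apply e', htgt] at h2
    exact ⟨(vSide_iso φV φE hsrc htgt z t0 _).1 h1,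
      (vSide_iso φV φE hsrc htgt z t0 _).1 h2⟩

lemma ncard_range_sum_inl {α β : Type} [Finite α] [Finite β] :
    (Set.range (Sum.inl : α → α ⊕ β)).ncard = Nat.card α := by
  rw [← Set.image_univ, Set.ncard_image_of_injective _ Sum.inl_injective, Set.ncard_univ]

lemma ncard_range_sum_inr {α β : Type} [Finite α] [Finite β] :
    (Set.range (Sum.inr : β → α ⊕ β)).ncard = Nat.card β := by
  rw [← Set.image_univ, Set.ncard_image_of_injective _ Sum.inr_injective, Set.ncard_univ]

/-- In `A.add B`, the `t`-avoiding side of the glue vertex is exactly the `A`-part. -/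
lemma add_vSideE_glue_t (A B : FlowGraph) (hB : B.Connected) (hBst : B.IsSTGraph)
    (hBne : B.s ≠ B.t) :
    (A.add B).vSideE (Quot.mk (addRel A B) (Sum.inr B.s)) (A.add B).t =
      Set.range Sum.inl := by
  have hAmem : ∀ a : A.V, Quot.mk (addRel A B) (Sum.inl a) ∈
      (A.add B).vSide (Quot.mk (addRel A B) (Sum.inr B.s)) (A.add B).t := by
    intro a
    by_cases hat : a = A.t
    · exact Or.inr (by rw [hat]; exact add_glue)
    · refine Or.inl fun hreach => ?_
      obtain ⟨a', ha', hat'⟩ := add_trap_inl hat hreach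
      exact hat' (add_inl_eq_inr.1
        (show Quot.mk (addRel A B) (Sum.inl a') = Quot.mk (addRel A B) (Sum.inr B.t)
          from ha'.symm)).1
  have hBreach : ∀ b : B.V, b ≠ B.s →
      (A.add B).reachOn
        {e | (A.add B).src e ≠ Quot.mk (addRel A B) (Sum.inr B.s) ∧
             (A.add B).tgt e ≠ Quot.mk (addRel A B) (Sum.inr B.s)}
        (Quot.mk (addRel A B) (Sum.inr b)) (A.add B).t :=
    fun b hb => add_lift_inr_avoid_glue (st_reach hB hBst hBne hb)
  ext e
  constructor
  · rintro ⟨hs, ht⟩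
    cases e with
    | inl ea => exact ⟨ea, rfl⟩
    | inr eb =>
        exfalso
        have h1 : B.src eb = B.s := by
          rcases hs with hnr | heq
          · by_contra hne
            exact hnr (hBreach _ hne)
          · exact add_inr_inj.1 heq
        have h2 : B.tgt eb = B.s := by
          rcases ht with hnr | heq
          · by_contra hne
            exact hnr (hBreach _ hne)
          · exact add_inr_inj.1 heq
        exact no_loop hBst eb (h1.trans h2.symm)
  · rintro ⟨ea, rfl⟩
    exact ⟨hAmem _, hAmem _⟩

/-- In `A.add B`, the `s`-avoiding side of the glue vertex is exactly the `B`-part. -/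
lemma add_vSideE_glue_s (A B : FlowGraph) (hA : A.Connected) (hAst : A.IsSTGraph)
    (hAne : A.s ≠ A.t) :
    (A.add B).vSideE (Quot.mk (addRel A B) (Sum.inr B.s)) (A.add B).s =
      Set.range Sum.inr := by
  have hBmem : ∀ b : B.V, Quot.mk (addRel A B) (Sum.inr b) ∈
      (A.add B).vSide (Quot.mk (addRel A B) (Sum.inr B.s)) (A.add B).s := by
    intro b
    by_cases hbs : b = B.s
    · exact Or.inr (by rw [hbs])
    · refine Or.inl fun hreach => ?_
      obtain ⟨b', hb', hbs'⟩ := add_trap_inr hbs hreach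
      -- hb' : (A.add B).s = ⟦inr b'⟧ , but (A.add B).s = ⟦inl A.s⟧
      have := (add_inl_eq_inr.1
        (show Quot.mk (addRel A B) (Sum.inl A.s) = Quot.mk (addRel A B) (Sum.inr b')
          from hb')).1
      exact hAne this
  have hAreach : ∀ a : A.V, a ≠ A.t →
      (A.add B).reachOn
        {e | (A.add B).src e ≠ Quot.mk (addRel A B) (Sum.inr B.s) ∧
             (A.add B).tgt e ≠ Quot.mk (addRel A B) (Sum.inr B.s)}
        (Quot.mk (addRel A B) (Sum.inl a)) (A.add B).s :=
    fun a ha => add_lift_inl_avoid_glue (st_reach' hA hAst hAne ha)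
  ext e
  constructor
  · rintro ⟨hs, ht⟩
    cases e with
    | inr eb => exact ⟨eb, rfl⟩
    | inl ea =>
        exfalso
        have h1 : A.src ea = A.t := by
          rcases hs with hnr | heq
          · by_contra hne
            exact hnr (hAreach _ hne)
          · exact (add_inl_eq_inr.1 heq).1
        have h2 : A.tgt ea = A.t := by
          rcases ht with hnr | heq
          · by_contra hne
            exact hnr (hAreach _ hne)
          · exact (add_inl_eq_inr.1 heq).1
        exact no_loop hAst ea (h1.trans h2.symm)
  · rintro ⟨eb, rfl⟩
    exact ⟨hBmem _, hBmem _⟩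


lemma counting_t (A B C : FlowGraph)
    (hA : A.Connected) (hB : B.Connected) (hC : C.Connected)
    (hBst : B.IsSTGraph)
    (hAne : A.s ≠ A.t) (hBne : B.s ≠ B.t)
    (φV : (A.add B).V ≃ (A.add C).V) (φE : (A.add B).E ≃ (A.add C).E)
    (hsrc : ∀ e, (A.add C).src (φE e) = φV ((A.add B).src e))
    (htgt : ∀ e, (A.add C).tgt (φE e) = φV ((A.add B).tgt e))
    (hφt : φV (A.add B).t = (A.add C).t)
    {a0 : A.V} (ha0 : a0 ≠ A.t)
    (hx : φV (Quot.mk (addRel A B) (Sum.inr B.s)) = Quot.mk (addRel A C) (Sum.inl a0)) :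
    False := by
  classical
  have hAEeq := add_vSideE_glue_t A B hB hBst hBne
  have him := vSideE_image φV φE hsrc htgt (Quot.mk (addRel A B) (Sum.inr B.s)) (A.add B).t
  rw [hx, hφt, hAEeq] at him
  have hreach' : ∀ c : C.V, (A.add C).reachOn
      {e | (A.add C).src e ≠ Quot.mk (addRel A C) (Sum.inl a0) ∧
           (A.add C).tgt e ≠ Quot.mk (addRel A C) (Sum.inl a0)}
      (Quot.mk (addRel A C) (Sum.inr c)) (A.add C).t :=
    fun c => add_lift_inr_avoid_inl ha0 (hC c C.t)
  have hPnot : ∀ c : C.V, Quot.mk (addRel A C) (Sum.inr c) ∉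
      (A.add C).vSide (Quot.mk (addRel A C) (Sum.inl a0)) (A.add C).t := by
    intro c hc
    rcases hc with hnr | heq
    · exact hnr (hreach' c)
    · exact ha0 (add_inl_eq_inr.1 heq.symm).1
  have hsub : (A.add C).vSideE (Quot.mk (addRel A C) (Sum.inl a0)) (A.add C).t ⊆
      Set.range Sum.inl := by
    rintro e ⟨hs, ht⟩
    cases e with
    | inl ea => exact ⟨ea, rfl⟩
    | inr ec => exact absurd hs (hPnot (C.src ec))
  obtain ⟨e0, he0⟩ := edge_at_t hA hAne
  have hw'not : Quot.mk (addRel A C) (Sum.inl A.t) ∉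
      (A.add C).vSide (Quot.mk (addRel A C) (Sum.inl a0)) (A.add C).t := by
    intro hc
    rw [show Quot.mk (addRel A C) (Sum.inl A.t) = Quot.mk (addRel A C) (Sum.inr C.s)
      from add_glue] at hc
    exact hPnot C.s hc
  have hstar : (Sum.inl e0 : (A.add C).E) ∉
      (A.add C).vSideE (Quot.mk (addRel A C) (Sum.inl a0)) (A.add C).t := by
    rintro ⟨hs, ht⟩
    rcases he0 with h0 | h0
    · exact hw'not (by rw [← h0]; exact hs)
    · exact hw'not (by rw [← h0]; exact ht)
  have hc2 : ((A.add C).vSideE (Quot.mk (addRel A C) (Sum.inl a0)) (A.add C).t).ncard =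
      Nat.card A.E := by
    rw [← him]; exact (Set.ncard_image_of_injective _ φE.injective).trans ncard_range_sum_inl
  have hc3 : ((A.add C).vSideE (Quot.mk (addRel A C) (Sum.inl a0)) (A.add C).t).ncard <
      (Set.range (Sum.inl : A.E → (A.add C).E)).ncard := by
    refine Set.ncard_lt_ncard ?_ (Set.toFinite _)
    exact (Set.ssubset_iff_of_subset hsub).2 ⟨Sum.inl e0, ⟨e0, rfl⟩, hstar⟩
  rw [hc2, ncard_range_sum_inl] at hc3
  exact lt_irrefl _ hc3

lemma counting_s (A B C : FlowGraph)
    (hA : A.Connected) (hB : B.Connected) (hC : C.Connected)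
    (hAst : A.IsSTGraph)
    (hAne : A.s ≠ A.t) (hCne : C.s ≠ C.t)
    (hcard : Nat.card B.E = Nat.card C.E)
    (φV : (A.add B).V ≃ (A.add C).V) (φE : (A.add B).E ≃ (A.add C).E)
    (hsrc : ∀ e, (A.add C).src (φE e) = φV ((A.add B).src e))
    (htgt : ∀ e, (A.add C).tgt (φE e) = φV ((A.add B).tgt e))
    (hφs : φV (A.add B).s = (A.add C).s)
    {c0 : C.V} (hc0 : c0 ≠ C.s)
    (hx : φV (Quot.mk (addRel A B) (Sum.inr B.s)) = Quot.mk (addRel A C) (Sum.inr c0)) :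
    False := by
  classical
  have hBEeq := add_vSideE_glue_s A B hA hAst hAne
  have him := vSideE_image φV φE hsrc htgt (Quot.mk (addRel A B) (Sum.inr B.s)) (A.add B).s
  rw [hx, hφs, hBEeq] at him
  have hreach' : ∀ a : A.V, (A.add C).reachOn
      {e | (A.add C).src e ≠ Quot.mk (addRel A C) (Sum.inr c0) ∧
           (A.add C).tgt e ≠ Quot.mk (addRel A C) (Sum.inr c0)}
      (Quot.mk (addRel A C) (Sum.inl a)) (A.add C).s :=
    fun a => add_lift_inl_avoid_inr hc0 (hA a A.s)
  have hPnot : ∀ a : A.V, Quot.mk (addRel A C) (Sum.inl a) ∉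
      (A.add C).vSide (Quot.mk (addRel A C) (Sum.inr c0)) (A.add C).s := by
    intro a hc
    rcases hc with hnr | heq
    · exact hnr (hreach' a)
    · exact hc0 (add_inl_eq_inr.1 heq).2
  have hsub : (A.add C).vSideE (Quot.mk (addRel A C) (Sum.inr c0)) (A.add C).s ⊆
      Set.range Sum.inr := by
    rintro e ⟨hs, ht⟩
    cases e with
    | inr ec => exact ⟨ec, rfl⟩
    | inl ea => exact absurd hs (hPnot (A.src ea))
  obtain ⟨e0, he0⟩ := edge_at_s hC hCne
  have hw'not : Quot.mk (addRel A C) (Sum.inr C.s) ∉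
      (A.add C).vSide (Quot.mk (addRel A C) (Sum.inr c0)) (A.add C).s := by
    intro hc
    rw [show Quot.mk (addRel A C) (Sum.inr C.s) = Quot.mk (addRel A C) (Sum.inl A.t)
      from add_glue.symm] at hc
    exact hPnot A.t hc
  have hstar : (Sum.inr e0 : (A.add C).E) ∉
      (A.add C).vSideE (Quot.mk (addRel A C) (Sum.inr c0)) (A.add C).s := by
    rintro ⟨hs, ht⟩
    rcases he0 with h0 | h0
    · exact hw'not (by rw [← h0]; exact hs)
    · exact hw'not (by rw [← h0]; exact ht)
  have hc2 : ((A.add C).vSideE (Quot.mk (addRel A C) (Sum.inr c0)) (A.add C).s).ncard =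
      Nat.card B.E := by
    rw [← him]; exact (Set.ncard_image_of_injective _ φE.injective).trans ncard_range_sum_inr
  have hc3 : ((A.add C).vSideE (Quot.mk (addRel A C) (Sum.inr c0)) (A.add C).s).ncard <
      (Set.range (Sum.inr : C.E → (A.add C).E)).ncard := by
    refine Set.ncard_lt_ncard ?_ (Set.toFinite _)
    exact (Set.ssubset_iff_of_subset hsub).2 ⟨Sum.inr e0, ⟨e0, rfl⟩, hstar⟩
  rw [hc2, ncard_range_sum_inr] at hc3
  exact absurd (hcard ▸ hc3) (lt_irrefl _)


lemma iso_of_glue_fixed (A B C : FlowGraph)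
    (hB : B.Connected) (hC : C.Connected)
    (hAst : A.IsSTGraph) (hBst : B.IsSTGraph) (hCst : C.IsSTGraph)
    (hBne : B.s ≠ B.t) (hCne : C.s ≠ C.t)
    (φV : (A.add B).V ≃ (A.add C).V) (φE : (A.add B).E ≃ (A.add C).E)
    (hsrc : ∀ e, (A.add C).src (φE e) = φV ((A.add B).src e))
    (htgt : ∀ e, (A.add C).tgt (φE e) = φV ((A.add B).tgt e))
    (hφt : φV (A.add B).t = (A.add C).t)
    (hww : φV (Quot.mk (addRel A B) (Sum.inr B.s)) = Quot.mk (addRel A C) (Sum.inr C.s)) :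
    B.Iso C := by
  classical
  have hSchar : ∀ u : (A.add B).V, (∃ b, u = Quot.mk (addRel A B) (Sum.inr b)) ↔
      (u = Quot.mk (addRel A B) (Sum.inr B.s) ∨
        (A.add B).reachOn
          {e | (A.add B).src e ≠ Quot.mk (addRel A B) (Sum.inr B.s) ∧
               (A.add B).tgt e ≠ Quot.mk (addRel A B) (Sum.inr B.s)} u (A.add B).t) := by
    intro u
    constructor
    · rintro ⟨b, rfl⟩
      by_cases hb : b = B.s
      · exact Or.inl (by rw [hb])
      · exact Or.inr (add_lift_inr_avoid_glue (st_reach hB hBst hBne hb))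
    · rintro (heq | hreach)
      · exact ⟨B.s, heq⟩
      · rcases add_vcases u with ⟨a, rfl⟩ | ⟨b, rfl⟩
        · by_cases hat : a = A.t
          · exact ⟨B.s, by rw [hat]; exact add_glue⟩
          · exfalso
            obtain ⟨a', ha', hat'⟩ := add_trap_inl hat hreach
            exact hat' (add_inl_eq_inr.1
              (show Quot.mk (addRel A B) (Sum.inl a') = Quot.mk (addRel A B) (Sum.inr B.t)
                from ha'.symm)).1
        · exact ⟨b, rfl⟩
  have hS'char : ∀ u : (A.add C).V, (∃ c, u = Quot.mk (addRel A C) (Sum.inr c)) ↔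
      (u = Quot.mk (addRel A C) (Sum.inr C.s) ∨
        (A.add C).reachOn
          {e | (A.add C).src e ≠ Quot.mk (addRel A C) (Sum.inr C.s) ∧
               (A.add C).tgt e ≠ Quot.mk (addRel A C) (Sum.inr C.s)} u (A.add C).t) := by
    intro u
    constructor
    · rintro ⟨c, rfl⟩
      by_cases hc : c = C.s
      · exact Or.inl (by rw [hc])
      · exact Or.inr (add_lift_inr_avoid_glue (st_reach hC hCst hCne hc))
    · rintro (heq | hreach)
      · exact ⟨C.s, heq⟩
      · rcases add_vcases u with ⟨a, rfl⟩ | ⟨c, rfl⟩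
        · by_cases hat : a = A.t
          · exact ⟨C.s, by rw [hat]; exact add_glue⟩
          · exfalso
            obtain ⟨a', ha', hat'⟩ := add_trap_inl hat hreach
            exact hat' (add_inl_eq_inr.1
              (show Quot.mk (addRel A C) (Sum.inl a') = Quot.mk (addRel A C) (Sum.inr C.t)
                from ha'.symm)).1
        · exact ⟨c, rfl⟩
  have key : ∀ u : (A.add B).V, (∃ b, u = Quot.mk (addRel A B) (Sum.inr b)) ↔
      (∃ c, φV u = Quot.mk (addRel A C) (Sum.inr c)) := by
    intro u
    rw [hSchar u, hS'char (φV u)]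
    have hr := iso_reach_avoid φV φE hsrc htgt (Quot.mk (addRel A B) (Sum.inr B.s)) u
      (A.add B).t
    rw [hφt, hww] at hr
    constructor
    · rintro (heq | hre)
      · exact Or.inl (by rw [heq, hww])
      · exact Or.inr (hr.1 hre)
    · rintro (heq | hre)
      · exact Or.inl (φV.injective (by rw [heq, hww]))
      · exact Or.inr (hr.2 hre)
  have hψ : ∀ b : B.V, ∃ c, φV (Quot.mk (addRel A B) (Sum.inr b)) =
      Quot.mk (addRel A C) (Sum.inr c) := fun b => (key _).1 ⟨b, rfl⟩
  choose ψ hψspec using hψ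
  have hψE : ∀ e : B.E, ∃ ec : C.E, φE (Sum.inr e) = Sum.inr ec := by
    intro e
    rcases he' : φE (Sum.inr e) with ea | ec
    · exfalso
      have h1 : (A.add C).src (Sum.inl ea) =
          φV (Quot.mk (addRel A B) (Sum.inr (B.src e))) := by
        rw [← he']; exact hsrc _
      have h2 : (A.add C).tgt (Sum.inl ea) =
          φV (Quot.mk (addRel A B) (Sum.inr (B.tgt e))) := by
        rw [← he']; exact htgt _
      rw [hψspec (B.src e)] at h1
      rw [hψspec (B.tgt e)] at h2
      have hs1 : A.src ea = A.t := (add_inl_eq_inr.1 h1).1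
      have hs2 : A.tgt ea = A.t := (add_inl_eq_inr.1 h2).1
      exact no_loop hAst ea (hs1.trans hs2.symm)
    · exact ⟨ec, rfl⟩
  choose ψE hψEspec using hψE
  have hψinj : Function.Injective ψ := by
    intro b b' hbb
    have h1 : φV (Quot.mk (addRel A B) (Sum.inr b)) =
        φV (Quot.mk (addRel A B) (Sum.inr b')) := by
      rw [hψspec, hψspec, hbb]
    exact add_inr_inj.1 (φV.injective h1)
  have hψsurj : Function.Surjective ψ := by
    intro c
    have hex : ∃ b, φV.symm (Quot.mk (addRel A C) (Sum.inr c)) =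
        Quot.mk (addRel A B) (Sum.inr b) := by
      rw [key]
      exact ⟨c, φV.apply_symm_apply _⟩
    obtain ⟨b, hb⟩ := hex
    refine ⟨b, ?_⟩
    have h1 : φV (Quot.mk (addRel A B) (Sum.inr b)) = Quot.mk (addRel A C) (Sum.inr c) := by
      rw [← hb]; exact φV.apply_symm_apply _
    rw [hψspec] at h1
    exact add_inr_inj.1 h1
  have hψEinj : Function.Injective ψE := by
    intro e e' hee
    have h1 : φE (Sum.inr e) = φE (Sum.inr e') := by rw [hψEspec, hψEspec, hee]
    exact Sum.inr_injective (φE.injective h1)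
  have hψEsurj : Function.Surjective ψE := by
    intro ec
    rcases he : φE.symm (Sum.inr ec) with ea | eb
    · exfalso
      have h1 : (A.add C).src (Sum.inr ec) =
          φV (Quot.mk (addRel A B) (Sum.inl (A.src ea))) := by
        have := hsrc (φE.symm (Sum.inr ec))
        have h0 : φE (φE.symm (Sum.inr ec)) = Sum.inr ec := φE.apply_symm_apply _
        rw [h0, he] at this
        exact this
      have h2 : (A.add C).tgt (Sum.inr ec) =
          φV (Quot.mk (addRel A B) (Sum.inl (A.tgt ea))) := by
        have := htgt (φE.symm (Sum.inr ec))
        have h0 : φE (φE.symm (Sum.inr ec)) = Sum.inr ec := φE.apply_symm_apply _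
        rw [h0, he] at this
        exact this
      have hs1 : A.src ea = A.t := by
        obtain ⟨b, hb⟩ := (key _).2 ⟨C.src ec, h1.symm⟩
        exact (add_inl_eq_inr.1 hb).1
      have hs2 : A.tgt ea = A.t := by
        obtain ⟨b, hb⟩ := (key _).2 ⟨C.tgt ec, h2.symm⟩
        exact (add_inl_eq_inr.1 hb).1
      exact no_loop hAst ea (hs1.trans hs2.symm)
    · refine ⟨eb, ?_⟩
      have h1 : φE (Sum.inr eb) = Sum.inr ec := by rw [← he]; exact φE.apply_symm_apply _
      rw [hψEspec] at h1
      exact Sum.inr_injective h1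
  refine ⟨Equiv.ofBijective ψ ⟨hψinj, hψsurj⟩, Equiv.ofBijective ψE ⟨hψEinj, hψEsurj⟩,
    ?_, ?_, ?_, ?_⟩
  · intro e
    show C.src (ψE e) = ψ (B.src e)
    have h1 : (A.add C).src (Sum.inr (ψE e)) =
        φV (Quot.mk (addRel A B) (Sum.inr (B.src e))) := by
      rw [← hψEspec]; exact hsrc _
    rw [hψspec] at h1
    exact add_inr_inj.1 h1
  · intro e
    show C.tgt (ψE e) = ψ (B.tgt e)
    have h1 : (A.add C).tgt (Sum.inr (ψE e)) =
        φV (Quot.mk (addRel A B) (Sum.inr (B.tgt e))) := by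
      rw [← hψEspec]; exact htgt _
    rw [hψspec] at h1
    exact add_inr_inj.1 h1
  · show ψ B.s = C.s
    exact add_inr_inj.1 ((hψspec B.s).symm.trans hww)
  · show ψ B.t = C.t
    exact add_inr_inj.1 ((hψspec B.t).symm.trans
      (show φV (Quot.mk (addRel A B) (Sum.inr B.t)) = Quot.mk (addRel A C) (Sum.inr C.t)
        from hφt))


end Lemmas

end FlowGraph

open FlowGraph in
/-- Left-cancellation law for `⊕` on st-flow graphs. -/
theorem flowGraph_add_left_cancel (A B C : FlowGraph)
    (hA : A.Connected) (hB : B.Connected) (hC : C.Connected)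
    (hAst : A.IsSTGraph) (hBst : B.IsSTGraph) (hCst : C.IsSTGraph)
    (h : (A.add B).Iso (A.add C)) :
    B.Iso C := by
  classical
  obtain ⟨φV, φE, hsrc, htgt, hφs, hφt⟩ := h
  have hcard : Nat.card B.E = Nat.card C.E := by
    have h2 : Nat.card (A.E ⊕ B.E) = Nat.card (A.E ⊕ C.E) := Nat.card_congr φE
    rw [Nat.card_sum, Nat.card_sum] at h2
    omega
  by_cases hBtriv : B.s = B.t
  · have hBE : IsEmpty B.E := edges_isEmpty_of_st hBst hBtriv
    have hCE : IsEmpty C.E := by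
      by_contra hc
      rw [not_isEmpty_iff] at hc
      have hpos : 0 < Nat.card C.E := Nat.card_pos
      rw [← hcard, Nat.card_of_isEmpty] at hpos
      exact lt_irrefl _ hpos
    exact iso_of_no_edges hB hC hBE hCE
  have hBne : B.s ≠ B.t := hBtriv
  have hCne : C.s ≠ C.t := by
    intro hc
    have hCE : IsEmpty C.E := edges_isEmpty_of_st hCst hc
    have hBE : IsEmpty B.E := by
      by_contra hcb
      rw [not_isEmpty_iff] at hcb
      have hpos : 0 < Nat.card B.E := Nat.card_pos
      rw [hcard, Nat.card_of_isEmpty] at hpos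
      exact lt_irrefl _ hpos
    exact hBtriv (eq_of_no_edges hB hBE B.s B.t)
  have hww : φV (Quot.mk (addRel A B) (Sum.inr B.s)) =
      Quot.mk (addRel A C) (Sum.inr C.s) := by
    by_cases hAtriv : A.s = A.t
    · have hwS : Quot.mk (addRel A B) (Sum.inr B.s) = (A.add B).s := by
        show _ = Quot.mk (addRel A B) (Sum.inl A.s)
        rw [hAtriv]
        exact add_glue.symm
      have hwS' : ((A.add C).s : (A.add C).V) = Quot.mk (addRel A C) (Sum.inr C.s) := by
        show Quot.mk (addRel A C) (Sum.inl A.s) = _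
        rw [hAtriv]
        exact add_glue
      rw [hwS, hφs]
      exact hwS'
    · rcases add_vcases (φV (Quot.mk (addRel A B) (Sum.inr B.s))) with ⟨a0, hx⟩ | ⟨c0, hx⟩
      · by_cases ha0 : a0 = A.t
        · rw [hx, ha0]
          exact add_glue
        · exact absurd (counting_t A B C hA hB hC hBst hAtriv hBne φV φE hsrc htgt hφt
            ha0 hx) id
      · by_cases hc0 : c0 = C.s
        · rw [hx, hc0]
        · exact absurd (counting_s A B C hA hB hC hAst hAtriv hCne hcard φV φE hsrc htgt
            hφs hc0 hx) id
  exact iso_of_glue_fixed A B C hB hC hAst hBst hCst hBne hCne φV φE hsrc htgt hφt hww
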